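/- Let (L₁, …, L_h; w₁, …, w_h) be a vertex hierarchy of height h on the weighted graph G = (V, w₁). Then for every 1 ≤ i ≤ h and all u, v ∈ V_i, dist_{w_i}(u,v) = dist_G(u,v). -/

import Mathlib

namespace ISLabel

variable {V : Type*}

/-- Two vertices are adjacent in the weighted graph `w` when they are distinct and
joined by an edge of finite weight. -/
def Adj (w : V → V → ℕ∞) (u v : V) : Prop := u ≠ v ∧ w u v < ⊤

/-- `p` is a walk from `u` to `v` in the weighted graph `w`: a nonempty list of
vertices starting at `u`, ending at `v`, with consecutive vertices adjacent. -/
def IsWalk (w : V → V → ℕ∞) (u v : V) (p : List V) : Prop :=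
  p ≠ [] ∧ p.head? = some u ∧ p.getLast? = some v ∧ p.Chain' (Adj w)

/-- The length of a list of vertices: the sum of `f` over consecutive pairs. -/
def pathLen (f : V → V → ℕ∞) (p : List V) : ℕ∞ :=
  ((p.zip p.tail).map fun e => f e.1 e.2).sum

/-- The distance from `u` to `v` in `w`: the infimum of the lengths of all walks
from `u` to `v` (`⊤` if there is no such walk). -/
noncomputable def wdist (w : V → V → ℕ∞) (u v : V) : ℕ∞ :=
  ⨅ p : {p : List V // IsWalk w u v p}, pathLen w p.1

/-- `I` is an independent set in `w`. -/
def IsIndep (w : V → V → ℕ∞) (I : Set V) : Prop :=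
  ∀ u ∈ I, ∀ v ∈ I, ¬ Adj w u v

/-- `w` is a weighted undirected graph: symmetric, and every off-diagonal value is
either `⊤` (no edge) or a weight `≥ 1`. -/
def IsWGraph (w : V → V → ℕ∞) : Prop :=
  (∀ u v, w u v = w v u) ∧ ∀ u v, u ≠ v → 1 ≤ w u v

/-- `w` is supported on `S`: all weights touching a vertex outside `S` are `⊤`. -/
def SupportedOn (w : V → V → ℕ∞) (S : Set V) : Prop :=
  ∀ u v, u ∉ S ∨ v ∉ S → w u v = ⊤

/-- `VsetOf L i` is the vertex set `V_i = V ∖ (L₁ ∪ … ∪ L_{i-1})`. -/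
def VsetOf (L : ℕ → Set V) (i : ℕ) : Set V := {v | ∀ j, 1 ≤ j → j < i → v ∉ L j}

/-- A vertex hierarchy of height `h ≥ 1` on the weighted graph `w 1`:
pairwise disjoint independent levels `L 1, …, L h` covering `V`, and graphs
`w i` supported on `V_i` obtained by the augmenting-edge construction. -/
structure VertexHierarchy (V : Type*) (h : ℕ) where
  L : ℕ → Set V
  w : ℕ → V → V → ℕ∞
  h_pos : 1 ≤ h
  wgraph : ∀ i, 1 ≤ i → i ≤ h → IsWGraph (w i)
  disj : ∀ i j, 1 ≤ i → i ≤ h → 1 ≤ j → j ≤ h → i ≠ j → ∀ v, v ∈ L i → v ∉ L j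
  cover : ∀ v : V, ∃ i, 1 ≤ i ∧ i ≤ h ∧ v ∈ L i
  supported : ∀ i, 1 ≤ i → i ≤ h → SupportedOn (w i) (VsetOf L i)
  aug : ∀ i, 2 ≤ i → i ≤ h → ∀ u v : V, u ≠ v → u ∈ VsetOf L i → v ∈ VsetOf L i →
    w i u v = min (w (i - 1) u v) (⨅ x ∈ L (i - 1), w (i - 1) u x + w (i - 1) x v)
  indep : ∀ i, 1 ≤ i → i ≤ h → IsIndep (w i) (L i)

/-- The level `ℓ(v)`: the unique `i` with `1 ≤ i ≤ h` and `v ∈ L i`. -/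
noncomputable def level {h : ℕ} (H : VertexHierarchy V h) (v : V) : ℕ :=
  sInf {i | 1 ≤ i ∧ i ≤ h ∧ v ∈ H.L i}

section Aux

lemma pathLen_nil (f : V → V → ℕ∞) : pathLen f ([] : List V) = 0 := by
  simp [pathLen]

lemma pathLen_single (f : V → V → ℕ∞) (a : V) : pathLen f [a] = 0 := by
  simp [pathLen]

lemma pathLen_cons₂ (f : V → V → ℕ∞) (a b : V) (l : List V) :
    pathLen f (a :: b :: l) = f a b + pathLen f (b :: l) := by
  simp [pathLen]

lemma isWalk_single {w : V → V → ℕ∞} {u v a : V} :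
    IsWalk w u v [a] ↔ u = a ∧ v = a := by
  constructor
  · rintro ⟨-, h1, h2, -⟩
    simp only [List.head?, List.getLast?] at h1 h2
    exact ⟨(Option.some_injective _ h1.symm), (Option.some_injective _ h2.symm)⟩
  · rintro ⟨rfl, rfl⟩
    exact ⟨by simp, by simp [List.head?], by simp [List.getLast?], List.isChain_singleton _⟩

lemma isWalk_cons₂ {w : V → V → ℕ∞} {u v a b : V} {l : List V} :
    IsWalk w u v (a :: b :: l) ↔ u = a ∧ Adj w a b ∧ IsWalk w b v (b :: l) := by
  constructor
  · rintro ⟨-, h1, h2, h3⟩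
    rw [List.Chain', List.isChain_cons_cons] at h3
    simp only [List.head?] at h1
    refine ⟨Option.some_injective _ h1.symm, h3.1, by simp, by simp [List.head?],
      ?_, h3.2⟩
    rwa [List.getLast?_cons_cons] at h2
  · rintro ⟨rfl, hadj, -, -, h2, h3⟩
    exact ⟨by simp, by simp [List.head?], by rwa [List.getLast?_cons_cons],
      List.isChain_cons_cons.mpr ⟨hadj, h3⟩⟩

lemma wdist_le_pathLen {w : V → V → ℕ∞} {u v : V} {p : List V} (hp : IsWalk w u v p) :
    wdist w u v ≤ pathLen w p :=
  iInf_le (fun q : {q : List V // IsWalk w u v q} => pathLen w q.1) ⟨p, hp⟩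

lemma mem_of_adj {w : V → V → ℕ∞} {S : Set V} (hs : SupportedOn w S) {a b : V}
    (h : Adj w a b) : a ∈ S ∧ b ∈ S := by
  by_contra hc
  have hor : a ∉ S ∨ b ∉ S := by tauto
  exact absurd (hs a b hor) (fun heq => absurd (heq ▸ h.2) (lt_irrefl _))

section Key

variable {w w' : V → V → ℕ∞} {S S' I : Set V}

/-- Head of a walk: the list starts with `u`. -/
lemma walk_head {u v : V} {q : List V} (hq : IsWalk w u v q) : ∃ t, q = u :: t := by
  obtain ⟨-, hh, -, -⟩ := hq
  match q with
  | [] => simp at hh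
  | x :: t => simp [List.head?] at hh; exact ⟨t, by rw [hh]⟩

/-- Contraction: a walk in `w` between vertices of `S'` yields a walk in `w'`
of at most the same length. -/
lemma contract (hsS : SupportedOn w S) (hindep : IsIndep w I)
    (hS' : ∀ a, a ∈ S' ↔ a ∈ S ∧ a ∉ I)
    (haug : ∀ a b, a ≠ b → a ∈ S' → b ∈ S' →
      w' a b = min (w a b) (⨅ x ∈ I, w a x + w x b)) :
    ∀ n (p : List V), p.length ≤ n → ∀ u v, IsWalk w u v p → u ∈ S' → v ∈ S' →
      ∃ q, IsWalk w' u v q ∧ pathLen w' q ≤ pathLen w p := by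
  intro n
  induction n with
  | zero =>
    intro p hlen u v hwalk _ _
    have hp : p = [] := List.eq_nil_of_length_eq_zero (Nat.le_zero.mp hlen)
    exact absurd hp hwalk.1
  | succ n IH =>
    intro p hlen u v hwalk hu hv
    match p with
    | [] => exact absurd rfl hwalk.1
    | [a] =>
      obtain ⟨rfl, rfl⟩ := isWalk_single.mp hwalk
      exact ⟨_, isWalk_single.mpr ⟨rfl, rfl⟩, by simp [pathLen_single]⟩
    | a :: b :: l =>
      obtain ⟨rfl, hab, hwalk'⟩ := isWalk_cons₂.mp hwalk
      by_cases hbI : b ∈ I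
      · -- b is a contracted vertex; the walk must continue
        match l with
        | [] =>
          obtain ⟨-, hvb⟩ := isWalk_single.mp hwalk'
          subst hvb
          exact absurd hbI ((hS' v).mp hv).2
        | c :: l' =>
          obtain ⟨-, hbc, hwalk''⟩ := isWalk_cons₂.mp hwalk'
          have hcI : c ∉ I := fun hcI => hindep b hbI c hcI hbc
          have hcS : c ∈ S := (mem_of_adj hsS hbc).2
          have hcS' : c ∈ S' := (hS' c).mpr ⟨hcS, hcI⟩
          have hlen' : (c :: l').length ≤ n := by
            simp at hlen ⊢; omega
          obtain ⟨q, hq, hqlen⟩ := IH (c :: l') hlen' c v hwalk'' hcS' hv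
          by_cases huc : u = c
          · subst huc
            refine ⟨q, hq, ?_⟩
            calc pathLen w' q ≤ pathLen w (u :: l') := hqlen
              _ ≤ w b u + pathLen w (u :: l') := le_add_self
              _ ≤ w u b + (w b u + pathLen w (u :: l')) := le_add_self
              _ = pathLen w (u :: b :: u :: l') := by
                  rw [pathLen_cons₂, pathLen_cons₂]
          · -- add the augmenting edge u–c
            have hedge : w' u c ≤ w u b + w b c := by
              rw [haug u c huc hu hcS']
              exact le_trans (min_le_right _ _) (iInf₂_le b hbI)
            obtain ⟨t, rfl⟩ := walk_head hq
            refine ⟨u :: c :: t, ?_, ?_⟩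
            · refine isWalk_cons₂.mpr ⟨rfl, ⟨huc, ?_⟩, hq⟩
              exact lt_of_le_of_lt hedge (ENat.add_lt_top.mpr ⟨hab.2, hbc.2⟩)
            · rw [pathLen_cons₂, pathLen_cons₂, pathLen_cons₂, ← add_assoc]
              exact add_le_add hedge hqlen
      · -- b survives; keep the edge u–b
        have hbS : b ∈ S := (mem_of_adj hsS hab).2
        have hbS' : b ∈ S' := (hS' b).mpr ⟨hbS, hbI⟩
        have hlen' : (b :: l).length ≤ n := by simp at hlen ⊢; omega
        obtain ⟨q, hq, hqlen⟩ := IH (b :: l) hlen' b v hwalk' hbS' hv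
        have hedge : w' u b ≤ w u b := by
          rw [haug u b hab.1 hu hbS']
          exact min_le_left _ _
        obtain ⟨t, rfl⟩ := walk_head hq
        refine ⟨u :: b :: t,
          isWalk_cons₂.mpr ⟨rfl, ⟨hab.1, lt_of_le_of_lt hedge hab.2⟩, hq⟩, ?_⟩
        rw [pathLen_cons₂, pathLen_cons₂]
        exact add_le_add hedge hqlen

/-- Expansion: a walk in `w'` yields a walk in `w` of at most the same length. -/
lemma expand [Fintype V] (hsS' : SupportedOn w' S')
    (hS' : ∀ a, a ∈ S' ↔ a ∈ S ∧ a ∉ I)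
    (haug : ∀ a b, a ≠ b → a ∈ S' → b ∈ S' →
      w' a b = min (w a b) (⨅ x ∈ I, w a x + w x b)) :
    ∀ (p : List V) u v, IsWalk w' u v p →
      ∃ q, IsWalk w u v q ∧ pathLen w q ≤ pathLen w' p := by
  intro p
  induction p with
  | nil => intro u v hwalk; exact absurd rfl hwalk.1
  | cons a l IHl =>
    intro u v hwalk
    match l, IHl with
    | [], _ =>
      obtain ⟨rfl, rfl⟩ := isWalk_single.mp hwalk
      exact ⟨_, isWalk_single.mpr ⟨rfl, rfl⟩, by simp [pathLen_single]⟩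
    | b :: l, IH =>
      obtain ⟨rfl, hab, hwalk'⟩ := isWalk_cons₂.mp hwalk
      obtain ⟨haS', hbS'⟩ := mem_of_adj hsS' hab
      obtain ⟨q, hq, hqlen⟩ := IH b v hwalk'
      obtain ⟨t, rfl⟩ := walk_head hq
      have heq := haug u b hab.1 haS' hbS'
      rcases min_cases (w u b) (⨅ x ∈ I, w u x + w x b) with ⟨hmin, -⟩ | ⟨hmin, -⟩
      · -- the direct edge realizes the weight
        rw [hmin] at heq
        have hadj : Adj w u b := ⟨hab.1, heq ▸ hab.2⟩
        refine ⟨u :: b :: t, isWalk_cons₂.mpr ⟨rfl, hadj, hq⟩, ?_⟩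
        rw [pathLen_cons₂, pathLen_cons₂, heq]
        exact add_le_add le_rfl hqlen
      · -- an augmenting path u–x–b realizes the weight
        rw [hmin] at heq
        classical
        set g : V → ℕ∞ := fun x => w u x + w x b with hg
        have hfin : (⨅ x ∈ I, w u x + w x b) = (Set.toFinite I).toFinset.inf g := by
          rw [Finset.inf_eq_iInf]
          exact iInf_congr fun x =>
            iInf_congr_Prop (Set.Finite.mem_toFinset _).symm (fun _ => rfl)
        have hlt : (Set.toFinite I).toFinset.inf g < ⊤ := by
          rw [← hfin, ← heq]; exact hab.2
        have hne : (Set.toFinite I).toFinset.Nonempty := by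
          rw [Finset.nonempty_iff_ne_empty]
          intro hemp
          rw [hemp] at hlt
          simp at hlt
        obtain ⟨x, hxmem, hxinf⟩ := Finset.exists_mem_eq_inf _ hne g
        have hxI : x ∈ I := (Set.Finite.mem_toFinset _).mp hxmem
        have hval : w u x + w x b = w' u b := by
          rw [heq, hfin, hxinf]
        have hvtop : w u x + w x b < ⊤ := hval ▸ hab.2
        have hux : w u x < ⊤ := lt_of_le_of_lt le_self_add hvtop
        have hxb : w x b < ⊤ := lt_of_le_of_lt le_add_self hvtop
        have huneq : u ≠ x := fun hh => ((hS' u).mp haS').2 (hh ▸ hxI)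
        have hbneq : x ≠ b := fun hh => ((hS' b).mp hbS').2 (hh ▸ hxI)
        refine ⟨u :: x :: b :: t, ?_, ?_⟩
        · exact isWalk_cons₂.mpr ⟨rfl, ⟨huneq, hux⟩,
            isWalk_cons₂.mpr ⟨rfl, ⟨hbneq, hxb⟩, hq⟩⟩
        · rw [pathLen_cons₂, pathLen_cons₂, pathLen_cons₂, ← add_assoc, hval]
          exact add_le_add le_rfl hqlen

/-- The key step: one level of the hierarchy preserves distances. -/
lemma key_step [Fintype V] (hsS : SupportedOn w S) (hsS' : SupportedOn w' S')
    (hindep : IsIndep w I) (hS' : ∀ a, a ∈ S' ↔ a ∈ S ∧ a ∉ I)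
    (haug : ∀ a b, a ≠ b → a ∈ S' → b ∈ S' →
      w' a b = min (w a b) (⨅ x ∈ I, w a x + w x b)) :
    ∀ u v, u ∈ S' → v ∈ S' → wdist w' u v = wdist w u v := by
  intro u v hu hv
  apply le_antisymm
  · refine le_iInf fun ⟨p, hp⟩ => ?_
    obtain ⟨q, hq, hqlen⟩ :=
      contract hsS hindep hS' haug p.length p le_rfl u v hp hu hv
    exact le_trans (wdist_le_pathLen hq) hqlen
  · refine le_iInf fun ⟨p, hp⟩ => ?_
    obtain ⟨q, hq, hqlen⟩ := expand hsS' hS' haug p u v hp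
    exact le_trans (wdist_le_pathLen hq) hqlen

end Key

end Aux

/-- each graph of a vertex hierarchy preserves the distances of the
original graph among its vertices. -/
theorem hierarchy_dist_preservation [Fintype V] {h : ℕ} (H : VertexHierarchy V h) :
    ∀ i, 1 ≤ i → i ≤ h → ∀ u v, u ∈ VsetOf H.L i → v ∈ VsetOf H.L i →
      wdist (H.w i) u v = wdist (H.w 1) u v := by
  intro i
  induction i with
  | zero => intro h1; exact absurd h1 (by omega)
  | succ i IH =>
    intro h1 h2 u v hu hv
    rcases Nat.eq_zero_or_pos i with rfl | hipos
    · rfl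
    · have hS' : ∀ a : V, a ∈ VsetOf H.L (i + 1) ↔ a ∈ VsetOf H.L i ∧ a ∉ H.L i := by
        intro a
        constructor
        · intro ha
          exact ⟨fun j hj1 hj2 => ha j hj1 (by omega), ha i hipos (by omega)⟩
        · rintro ⟨ha, hai⟩ j hj1 hj2
          rcases Nat.lt_or_ge j i with hj | hj
          · exact ha j hj1 hj
          · have hji : j = i := by omega
            exact hji ▸ hai
      have haug : ∀ a b : V, a ≠ b → a ∈ VsetOf H.L (i + 1) → b ∈ VsetOf H.L (i + 1) →
          H.w (i + 1) a b =
            min (H.w i a b) (⨅ x ∈ H.L i, H.w i a x + H.w i x b) := by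
        intro a b hab ha hb
        have haux := H.aug (i + 1) (by omega) h2 a b hab ha hb
        simpa using haux
      have hkey := key_step (H.supported i hipos (by omega))
        (H.supported (i + 1) h1 h2) (H.indep i hipos (by omega)) hS' haug u v hu hv
      rw [hkey]
      exact IH hipos (by omega) u v ((hS' u).mp hu).1 ((hS' v).mp hv).1

end ISLabel
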